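/- For the W_n-mappings and any point x in C, ‖W_n x − W_{n−1} x‖ ≤ M · ∏_{i=1}^{n−1} γ_i, where M is any constant bounding ‖U_{n,n} x − U_{n−1,n} x‖ over n. -/

import Mathlib

open scoped RealInnerProductSpace
open Filter

/-- `Uaux T g n m` is the Shimoji–Takahashi mapping `U_{n, n+1-m}`, so that
`Uaux T g n 0 = U_{n,n+1} = id` and `Uaux T g n n = U_{n,1} = W_n`. -/
def Uaux {H : Type*} [NormedAddCommGroup H] [InnerProductSpace ℝ H]
    (T : ℕ → H → H) (g : ℕ → ℝ) (n : ℕ) : ℕ → H → H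
  | 0 => id
  | (m + 1) => fun x => g (n - m) • T (n - m) (Uaux T g n m x) + (1 - g (n - m)) • x

/-- The `W_n`-mapping generated by `T₁, T₂, …` and `γ₁, γ₂, …`. -/
def Wmap {H : Type*} [NormedAddCommGroup H] [InnerProductSpace ℝ H]
    (T : ℕ → H → H) (g : ℕ → ℝ) (n : ℕ) : H → H :=
  Uaux T g n n

theorem stmt_12 {H : Type*} [NormedAddCommGroup H] [InnerProductSpace ℝ H]
    [CompleteSpace H] (C : Set H) (hCne : C.Nonempty) (hCcl : IsClosed C)
    (hCcv : Convex ℝ C)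
    (T : ℕ → H → H) (hTmaps : ∀ i ≥ 1, Set.MapsTo (T i) C C)
    (hTne : ∀ i ≥ 1, ∀ x ∈ C, ∀ y ∈ C, ‖T i x - T i y‖ ≤ ‖x - y‖)
    (g : ℕ → ℝ) (γ : ℝ) (hγ : γ < 1)
    (hg : ∀ i ≥ 1, 0 < g i ∧ g i ≤ γ)
    (x : H) (hx : x ∈ C)
    (M : ℝ) (hM : ∀ n ≥ 1, ‖Uaux T g n 1 x - x‖ ≤ M) :
    ∀ n ≥ 1, ‖Wmap T g n x - Wmap T g (n - 1) x‖ ≤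
      M * ∏ i ∈ Finset.Icc 1 (n - 1), g i := by
  intro n hn
  -- All intermediate points stay in C
  have hC : ∀ N m, m ≤ N → Uaux T g N m x ∈ C := by
    intro N m
    induction m with
    | zero => intro _; exact hx
    | succ m ih =>
      intro hm
      have hk : 1 ≤ N - m := by omega
      obtain ⟨h1, h2⟩ := hg (N - m) hk
      have hTa : T (N - m) (Uaux T g N m x) ∈ C := hTmaps _ hk (ih (by omega))
      show g (N - m) • T (N - m) (Uaux T g N m x) + (1 - g (N - m)) • x ∈ C
      exact hCcv hTa hx h1.le (by linarith) (by ring)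
  have key : ∀ m, m ≤ n - 1 →
      ‖Uaux T g n (m + 1) x - Uaux T g (n - 1) m x‖ ≤
        M * ∏ j ∈ Finset.Icc 1 m, g (n - j) := by
    intro m
    induction m with
    | zero =>
      intro _
      have h0 : Uaux T g (n - 1) 0 x = x := rfl
      simpa [h0] using hM n hn
    | succ m ih =>
      intro hm
      have hmn : m ≤ n - 1 := by omega
      set k := n - 1 - m with hkdef
      have hk1 : 1 ≤ k := by omega
      obtain ⟨hg1, hg2⟩ := hg k hk1
      have e1 : Uaux T g n (m + 2) x
          = g k • T k (Uaux T g n (m + 1) x) + (1 - g k) • x := by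
        show g (n - (m + 1)) • T (n - (m + 1)) (Uaux T g n (m + 1) x)
            + (1 - g (n - (m + 1))) • x = _
        have hkeq : n - (m + 1) = k := by omega
        rw [hkeq]
      have e2 : Uaux T g (n - 1) (m + 1) x
          = g k • T k (Uaux T g (n - 1) m x) + (1 - g k) • x := by
        show g ((n - 1) - m) • T ((n - 1) - m) (Uaux T g (n - 1) m x)
            + (1 - g ((n - 1) - m)) • x = _
        have hkeq : (n - 1) - m = k := by omega
        rw [hkeq]
      have ediff : Uaux T g n (m + 2) x - Uaux T g (n - 1) (m + 1) x
          = g k • (T k (Uaux T g n (m + 1) x) - T k (Uaux T g (n - 1) m x)) := by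
        rw [e1, e2, smul_sub]; abel
      have ha : Uaux T g n (m + 1) x ∈ C := hC n (m + 1) (by omega)
      have hb : Uaux T g (n - 1) m x ∈ C := hC (n - 1) m (by omega)
      have hne := hTne k hk1 _ ha _ hb
      calc ‖Uaux T g n (m + 2) x - Uaux T g (n - 1) (m + 1) x‖
          = g k * ‖T k (Uaux T g n (m + 1) x) - T k (Uaux T g (n - 1) m x)‖ := by
            rw [ediff, norm_smul, Real.norm_of_nonneg hg1.le]
        _ ≤ g k * ‖Uaux T g n (m + 1) x - Uaux T g (n - 1) m x‖ :=
            mul_le_mul_of_nonneg_left hne hg1.le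
        _ ≤ g k * (M * ∏ j ∈ Finset.Icc 1 m, g (n - j)) :=
            mul_le_mul_of_nonneg_left (ih hmn) hg1.le
        _ = M * ∏ j ∈ Finset.Icc 1 (m + 1), g (n - j) := by
            rw [Finset.prod_Icc_succ_top (by omega : 1 ≤ m + 1)]
            have hkeq : n - (m + 1) = k := by omega
            rw [hkeq]; ring
  have hkey := key (n - 1) le_rfl
  have hn1 : n - 1 + 1 = n := by omega
  rw [hn1] at hkey
  have hprod : ∏ j ∈ Finset.Icc 1 (n - 1), g (n - j)
      = ∏ i ∈ Finset.Icc 1 (n - 1), g i := by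
    refine Finset.prod_nbij' (fun j => n - j) (fun i => n - i) ?_ ?_ ?_ ?_ ?_
    · intro a ha; simp only [Finset.mem_Icc] at *; omega
    · intro a ha; simp only [Finset.mem_Icc] at *; omega
    · intro a ha; simp only [Finset.mem_Icc] at *; omega
    · intro a ha; simp only [Finset.mem_Icc] at *; omega
    · intro a ha; rfl
  rw [← hprod]
  exact hkey
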